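/- arXiv:2307.03106 — 2 statements merged into one kernel-verified Lean document; each statement's English description precedes it below -/
import Mathlib

section
/- Let G be a group and let S be a nonempty proper subset of G. The Cayley poset P(G,S) is a Cayley representation of G if and only if the complement Cayley poset P(G, G∖S) is a Cayley representation of G. -/
variable {G : Type*}

/-- The order relation of the Cayley poset `P(G,S)`: the underlying set is the disjoint
union of two copies of `G` (`Sum.inl g` is written `g`, `Sum.inr h` is written `h'`),
with `g < h'` iff `g⁻¹ * h ∈ S`, and no other distinct elements comparable. -/
def cayleyLE [Group G] (S : Set G) : G ⊕ G → G ⊕ G → Prop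
  | Sum.inl g, Sum.inl h => g = h
  | Sum.inl g, Sum.inr h => g⁻¹ * h ∈ S
  | Sum.inr _, Sum.inl _ => False
  | Sum.inr g, Sum.inr h => g = h

/-- The Cayley poset `P(G,S)` as a type synonym for `G ⊕ G`. -/
def CayleyPoset (G : Type*) [Group G] (S : Set G) : Type _ := G ⊕ G

instance [Group G] (S : Set G) : PartialOrder (CayleyPoset G S) where
  le x y := cayleyLE S x y
  le_refl x := by cases x <;> exact rfl
  le_trans x y z hxy hyz := by
    cases x <;> cases y <;> cases z <;> simp_all [cayleyLE]
  le_antisymm x y hxy hyx := by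
    cases x <;> cases y <;> simp_all [cayleyLE] <;> rfl

/-- The map `L(g)` on `P(G,S)`: `h ↦ g*h` on minimal points and `h' ↦ (g*h)'` on
maximal points. -/
def cayleyL [Group G] (g : G) : G ⊕ G → G ⊕ G
  | Sum.inl h => Sum.inl (g * h)
  | Sum.inr h => Sum.inr (g * h)

/-- `P(G,S)` is a Cayley representation of `G` if every order automorphism of the
Cayley poset `P(G,S)` equals `L(g)` for some `g ∈ G`. -/
def IsCayleyRep (G : Type*) [Group G] (S : Set G) : Prop :=
  ∀ φ : CayleyPoset G S ≃o CayleyPoset G S,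
    ∃ g : G, ∀ p : CayleyPoset G S, φ p = cayleyL g p

section Aux

variable [Group G] {S : Set G}

lemma cayley_inr_le {g : G} {x : G ⊕ G} (h : cayleyLE S (Sum.inr g) x) :
    x = Sum.inr g := by
  cases x with
  | inl a => exact (h : False).elim
  | inr a => exact congrArg Sum.inr (h : g = a).symm

lemma cayley_maps_inl (hS : S.Nonempty) (φ : CayleyPoset G S ≃o CayleyPoset G S) (g : G) :
    ∃ h, φ (Sum.inl g) = Sum.inl h := by
  cases hfg : φ (Sum.inl g) with
  | inl h => exact ⟨h, rfl⟩
  | inr h =>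
    obtain ⟨s, hs⟩ := hS
    have h1 : cayleyLE S (Sum.inl g) (Sum.inr (g * s)) := by
      show g⁻¹ * (g * s) ∈ S
      simpa using hs
    have h2 : cayleyLE S (φ (Sum.inl g)) (φ (Sum.inr (g * s))) := φ.monotone h1
    rw [hfg] at h2
    have h3 := cayley_inr_le h2
    have h4 := φ.injective (h3.trans hfg.symm)
    simp at h4

lemma cayley_maps_inr (hS : S.Nonempty) (φ : CayleyPoset G S ≃o CayleyPoset G S) (g : G) :
    ∃ h, φ (Sum.inr g) = Sum.inr h := by
  cases hfg : φ (Sum.inr g) with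
  | inr h => exact ⟨h, rfl⟩
  | inl h =>
    obtain ⟨k, hk⟩ := cayley_maps_inl hS φ.symm h
    have h2 : (Sum.inr g : G ⊕ G) = Sum.inl k := by
      have := φ.symm_apply_apply (Sum.inr g)
      rw [hfg, hk] at this
      exact this.symm
    simp at h2

lemma cayley_transfer {S T : Set G} (hT : T.Nonempty)
    (hST : ∀ a : G, a ∈ T ↔ a ∉ S) (hrep : IsCayleyRep G S) : IsCayleyRep G T := by
  intro ψ
  have key : ∀ x y : G ⊕ G, cayleyLE S (ψ x) (ψ y) ↔ cayleyLE S x y := by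
    intro x y
    cases x with
    | inl g =>
      obtain ⟨a, ha⟩ := cayley_maps_inl hT ψ g
      cases y with
      | inl h =>
        obtain ⟨b, hb⟩ := cayley_maps_inl hT ψ h
        rw [ha, hb]
        constructor
        · intro hle
          have hab : a = b := hle
          have : ψ (Sum.inl g) = ψ (Sum.inl h) := by
            rw [ha, hb, hab]
          have := ψ.injective this
          exact (Sum.inl.inj this : g = h)
        · intro hle
          have hgh : g = h := hle
          subst hgh
          exact (Sum.inl.inj (ha.symm.trans hb) : a = b)
      | inr h =>
        obtain ⟨b, hb⟩ := cayley_maps_inr hT ψ h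
        have hiff := ψ.le_iff_le (x := Sum.inl g) (y := Sum.inr h)
        rw [ha, hb] at hiff
        have hiff' : (a⁻¹ * b ∈ T) ↔ (g⁻¹ * h ∈ T) := hiff
        rw [hST, hST] at hiff'
        rw [ha, hb]
        exact not_iff_not.mp hiff'
    | inr g =>
      obtain ⟨a, ha⟩ := cayley_maps_inr hT ψ g
      cases y with
      | inl h =>
        obtain ⟨b, hb⟩ := cayley_maps_inl hT ψ h
        rw [ha, hb]
        exact Iff.rfl
      | inr h =>
        obtain ⟨b, hb⟩ := cayley_maps_inr hT ψ h
        rw [ha, hb]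
        constructor
        · intro hle
          have hab : a = b := hle
          have : ψ (Sum.inr g) = ψ (Sum.inr h) := by
            rw [ha, hb, hab]
          have := ψ.injective this
          exact (Sum.inr.inj this : g = h)
        · intro hle
          have hgh : g = h := hle
          subst hgh
          exact (Sum.inr.inj (ha.symm.trans hb) : a = b)
  let φ : CayleyPoset G S ≃o CayleyPoset G S :=
    { toEquiv := ψ.toEquiv, map_rel_iff' := fun {x y} => key x y }
  obtain ⟨g, hg⟩ := hrep φ
  exact ⟨g, fun p => hg p⟩

end Aux

/-- For a nonempty proper subset `S ⊆ G`, `P(G,S)` is a Cayley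
representation of `G` iff the complement `P(G, G ∖ S)` is. -/
theorem cayleyRep_iff_complement (G : Type*) [Group G] (S : Set G)
    (hne : S.Nonempty) (hproper : S ≠ Set.univ) :
    IsCayleyRep G S ↔ IsCayleyRep G Sᶜ := by
  have hSc : Sᶜ.Nonempty := Set.nonempty_compl.mpr hproper
  constructor
  · exact cayley_transfer hSc (fun a => Iff.rfl)
  · exact cayley_transfer hne (fun a => by simp)
end

section
/- Let G be a group and let S be a nonempty subset of G. The Cayley poset P(G,S) is connected (any two points are joined by a finite sequence of pairwise-comparable consecutive points) if and only if the set SS⁻¹ = {st⁻¹ : s, t ∈ S} generates G. -/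
variable {G : Type*}

private lemma cayley_le_def {G : Type*} [Group G] {S : Set G} {x y : G ⊕ G}
    (h : cayleyLE S x y) : @LE.le (CayleyPoset G S) _ x y := h

open Pointwise Relation in
private lemma cayleyL_le {G : Type*} [Group G] {S : Set G} (g : G)
    {x y : CayleyPoset G S} (h : x ≤ y) :
    @LE.le (CayleyPoset G S) _ (cayleyL g x) (cayleyL g y) := by
  have h' : cayleyLE S x y := h
  refine cayley_le_def ?_
  cases x <;> cases y <;> simp_all [cayleyLE, cayleyL, mul_assoc]

open Pointwise Relation in
private lemma cayleyR_map {G : Type*} [Group G] {S : Set G} (g : G)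
    {x y : CayleyPoset G S}
    (h : ReflTransGen (fun a b : CayleyPoset G S => a ≤ b ∨ b ≤ a) x y) :
    ReflTransGen (fun a b : CayleyPoset G S => a ≤ b ∨ b ≤ a)
      (cayleyL g x) (cayleyL g y) :=
  ReflTransGen.lift (cayleyL g)
    (fun (a b : CayleyPoset G S) (hab : a ≤ b ∨ b ≤ a) => hab.imp (cayleyL_le g) (cayleyL_le g)) _ _ h

open Pointwise in
/-- The Cayley poset `P(G,S)` is connected iff
`S * S⁻¹ = {s*t⁻¹ : s,t ∈ S}` generates `G`. -/
theorem cayleyPoset_connected_iff (G : Type*) [Group G] (S : Set G) (hne : S.Nonempty) :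
    (∀ x y : CayleyPoset G S,
        Relation.ReflTransGen (fun a b : CayleyPoset G S => a ≤ b ∨ b ≤ a) x y) ↔
      Subgroup.closure (S * S⁻¹) = ⊤ := by
  classical
  obtain ⟨s₀, hs₀⟩ := hne
  set H := Subgroup.closure (S * S⁻¹) with hH
  constructor
  · intro hconn
    have gen : ∀ {u v : G}, u⁻¹ * v ∈ S → u⁻¹ * (v * s₀⁻¹) ∈ H := by
      intro u v huv
      have : (u⁻¹ * v) * s₀⁻¹ ∈ S * S⁻¹ :=
        Set.mul_mem_mul huv (Set.inv_mem_inv.mpr hs₀)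
      simpa [mul_assoc] using Subgroup.subset_closure this
    have key : ∀ x y : CayleyPoset G S,
        Relation.ReflTransGen (fun a b : CayleyPoset G S => a ≤ b ∨ b ≤ a) x y →
        (Sum.elim id (fun h => h * s₀⁻¹) x)⁻¹ * (Sum.elim id (fun h => h * s₀⁻¹) y) ∈ H := by
      intro x y h
      induction h with
      | refl => simpa using H.one_mem
      | tail _ hbc ih =>
        rename_i b c _
        have step : (Sum.elim id (fun h => h * s₀⁻¹) b)⁻¹ *
            (Sum.elim id (fun h => h * s₀⁻¹) c) ∈ H := by
          rcases hbc with hbc | hbc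
          · cases b with
            | inl u =>
              cases c with
              | inl v =>
                have hv : u = v := hbc
                subst hv; simpa using H.one_mem
              | inr v =>
                have hv : u⁻¹ * v ∈ S := hbc
                simpa using gen hv
            | inr u =>
              cases c with
              | inl v => exact absurd hbc id
              | inr v =>
                have hv : u = v := hbc
                subst hv; simpa [mul_assoc] using H.one_mem
          · cases b with
            | inl u =>
              cases c with
              | inl v =>
                have hv : v = u := hbc
                subst hv; simpa using H.one_mem
              | inr v => exact absurd hbc id
            | inr u =>
              cases c with
              | inl v =>
                have hv : v⁻¹ * u ∈ S := hbc
                have := H.inv_mem (gen hv)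
                simpa [mul_assoc] using this
              | inr v =>
                have hv : v = u := hbc
                subst hv; simpa [mul_assoc] using H.one_mem
        have := H.mul_mem ih step
        simpa [mul_assoc] using this
    rw [eq_top_iff]
    intro g _
    have := key (Sum.inl 1) (Sum.inl g) (hconn _ _)
    simpa using this
  · intro htop
    have reach : ∀ g : G,
        Relation.ReflTransGen (fun a b : CayleyPoset G S => a ≤ b ∨ b ≤ a)
          (Sum.inl 1) (Sum.inl g) := by
      intro g
      have hg : g ∈ H := htop ▸ Subgroup.mem_top g
      induction hg using Subgroup.closure_induction with
      | mem u hu =>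
        obtain ⟨s, hs, t, ht, rfl⟩ := hu
        have ht' : t⁻¹ ∈ S := ht
        have h1 : @LE.le (CayleyPoset G S) _ (Sum.inl 1) (Sum.inr s) :=
          cayley_le_def (by simpa [cayleyLE] using hs)
        have h2 : @LE.le (CayleyPoset G S) _ (Sum.inl (s * t)) (Sum.inr s) :=
          cayley_le_def (by simpa [cayleyLE, mul_assoc] using ht')
        exact Relation.ReflTransGen.tail (Relation.ReflTransGen.single (Or.inl h1))
          (Or.inr h2)
      | one => exact Relation.ReflTransGen.refl
      | mul a b _ _ iha ihb =>
        exact iha.trans (by simpa [cayleyL] using cayleyR_map (S := S) a ihb)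
      | inv a _ iha =>
        have := cayleyR_map (S := S) a⁻¹ iha
        simp only [cayleyL, inv_mul_cancel, mul_one] at this
        exact (@Relation.ReflTransGen.stdSymm _ _ ⟨fun x y h => h.symm⟩).symm _ _ this
    have reach' : ∀ x : CayleyPoset G S,
        Relation.ReflTransGen (fun a b : CayleyPoset G S => a ≤ b ∨ b ≤ a)
          (Sum.inl 1) x := by
      intro x
      cases x with
      | inl g => exact reach g
      | inr h =>
        exact (reach (h * s₀⁻¹)).tail
          (Or.inl (cayley_le_def (by simpa [cayleyLE, mul_assoc] using hs₀)))
    intro x y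
    exact ((@Relation.ReflTransGen.stdSymm _ _ ⟨fun a b h => h.symm⟩).symm _ _ (reach' x)).trans
      (reach' y)
end
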